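/- Let p be a prime and let d, i be integers with 1 ≤ i ≤ d. Let e_1, …, e_d be the standard basis of ℤ_p^d. For a subset W ⊆ {1, …, d} with d−i elements, put N_W = the ℤ_p-span of {e_w : w ∈ W} and H_W = {g ∈ GL_d(ℤ_p) : g_{jk} = δ_{jk} whenever j ∈ W or k ∉ W}. Then for every N ∈ Gr(i, ℤ_p^d) there exist a subset W ⊆ {1, …, d} with d−i elements and a matrix g ∈ H_W such that g(N_W) = N. -/

import Mathlib

set_option maxHeartbeats 1000000

/-- Let `p` be prime and `1 ≤ i ≤ d`. For `W ⊆ {1, …, d}` with `d − i`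
elements let `N_W` be the `ℤ_p`-span of the standard basis vectors `e_w`, `w ∈ W`, and let
`H_W = {g ∈ GL_d(ℤ_p) : g_{jk} = δ_{jk} whenever j ∈ W or k ∉ W}`. Then every
`N ∈ Gr(i, ℤ_p^d)` (i.e. every submodule `N` with `ℤ_p^d/N` free of rank `i`) is of the form
`g(N_W)` for some such `W` and some `g ∈ H_W`. -/
theorem grassmannian_covered_by_charts
    (p : ℕ) [Fact p.Prime] (d i : ℕ) (hi : 1 ≤ i) (hid : i ≤ d)
    (N : Submodule (PadicInt p) (Fin d → PadicInt p))
    (hNfree : Module.Free (PadicInt p) ((Fin d → PadicInt p) ⧸ N))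
    (hNrank : Module.finrank (PadicInt p) ((Fin d → PadicInt p) ⧸ N) = i) :
    ∃ W : Finset (Fin d), W.card = d - i ∧
      ∃ g : Matrix (Fin d) (Fin d) (PadicInt p), IsUnit g ∧
        (∀ j k : Fin d, (j ∈ W ∨ k ∉ W) → g j k = if j = k then 1 else 0) ∧
        Submodule.map (Matrix.mulVecLin g)
          (Submodule.span (PadicInt p)
            {v : Fin d → PadicInt p | ∃ w ∈ W, v = Pi.single w 1}) = N := by
  classical
  set R := PadicInt p with hRdef
  obtain ⟨v, hv⟩ : ∃ v : Fin d → ((Fin d → R) ⧸ N),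
      ∀ j, v j = N.mkQ (Pi.single j 1) := ⟨_, fun _ => rfl⟩
  have hmk : ∀ x : Fin d → R, N.mkQ x = ∑ j, x j • v j := by
    intro x
    conv_lhs => rw [← Finset.univ_sum_single x]
    rw [map_sum]
    refine Finset.sum_congr rfl fun j _ => ?_
    have h1 : Pi.single j (x j) = x j • (Pi.single j 1 : Fin d → R) := by
      rw [← Pi.single_smul, smul_eq_mul, mul_one]
    rw [h1, map_smul, hv]
  have hspanU : Submodule.span R (v '' ↑(Finset.univ : Finset (Fin d))) = ⊤ := by
    rw [eq_top_iff]
    rintro q -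
    obtain ⟨x, rfl⟩ := N.mkQ_surjective q
    rw [hmk]
    exact Submodule.sum_mem _ fun j _ => Submodule.smul_mem _ _
      (Submodule.subset_span ⟨j, by simp, rfl⟩)
  have hex : ∃ n, ∃ T : Finset (Fin d), T.card = n ∧
      Submodule.span R (v '' ↑T) = ⊤ := ⟨_, Finset.univ, rfl, hspanU⟩
  obtain ⟨S, hScardeq, hSspan⟩ := Nat.find_spec hex
  have hSmin : ∀ T : Finset (Fin d), Submodule.span R (v '' ↑T) = ⊤ →
      S.card ≤ T.card := by
    intro T hT
    rw [hScardeq]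
    exact Nat.find_le ⟨T, rfl, hT⟩
  -- linear independence of the family on S
  have hind : ∀ c : {x // x ∈ S} → R, (∑ s, c s • v ↑s) = 0 → ∀ s, c s = 0 := by
    intro c hc
    by_contra hne
    push_neg at hne
    obtain ⟨s0, hs0⟩ := hne
    set I : Ideal R := Ideal.span (Set.range c) with hI
    obtain ⟨g, hgI⟩ := Submodule.IsPrincipal.principal I
    have hcI : ∀ s, c s ∈ I := fun s => Ideal.subset_span ⟨s, rfl⟩
    have hg0 : g ≠ 0 := by
      rintro rfl
      have h2 := hcI s0
      rw [hgI, Submodule.span_singleton_eq_bot.mpr rfl, Submodule.mem_bot] at h2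
      exact hs0 h2
    have hc'ex : ∀ s, ∃ e, c s = g * e := by
      intro s
      have h2 := hcI s
      rw [hgI] at h2
      obtain ⟨a, ha⟩ := Ideal.mem_span_singleton'.1 h2
      exact ⟨a, by rw [← ha, mul_comm]⟩
    choose c' hc' using hc'ex
    have hgmem : g ∈ I := by rw [hgI]; exact Submodule.mem_span_singleton_self g
    rw [hI] at hgmem
    obtain ⟨a, ha⟩ := (Submodule.mem_span_range_iff_exists_fun R).1 hgmem
    have hone : ∑ s, a s * c' s = 1 := by
      have h2 : g * (∑ s, a s * c' s) = g * 1 := by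
        rw [mul_one, Finset.mul_sum]
        calc ∑ s, g * (a s * c' s) = ∑ s, a s • c s :=
              Finset.sum_congr rfl fun s _ => by rw [smul_eq_mul, hc' s]; ring
          _ = g := ha
      exact mul_left_cancel₀ hg0 h2
    have hunit : ∃ s, IsUnit (c' s) := by
      by_contra hnu
      push_neg at hnu
      have h2 : (1 : R) ∈ IsLocalRing.maximalIdeal R := by
        rw [← hone]
        exact Ideal.sum_mem _ fun s _ => Ideal.mul_mem_left _ _
          ((IsLocalRing.mem_maximalIdeal _).2 (mem_nonunits_iff.2 (hnu s)))
      exact (IsLocalRing.maximalIdeal.isMaximal R).ne_top ((Ideal.eq_top_iff_one _).2 h2)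
    obtain ⟨s1, hs1⟩ := hunit
    have hc'0 : ∑ s, c' s • v ↑s = 0 := by
      have h1 : g • (∑ s, c' s • v ↑s) = 0 := by
        rw [Finset.smul_sum, ← hc]
        refine Finset.sum_congr rfl fun s _ => ?_
        rw [smul_smul, ← hc' s]
      rcases smul_eq_zero.1 h1 with h | h
      · exact absurd h hg0
      · exact h
    have hrest : c' s1 • v ↑s1 = - ∑ s ∈ Finset.univ.erase s1, c' s • v ↑s := by
      have h := hc'0
      rw [← Finset.add_sum_erase Finset.univ (fun s => c' s • v ↑s)
        (Finset.mem_univ s1)] at h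
      exact eq_neg_of_add_eq_zero_left h
    have hmemrest : ∀ s ∈ Finset.univ.erase s1,
        v ↑s ∈ Submodule.span R (v '' ↑(S.erase ↑s1)) := by
      intro s hs
      refine Submodule.subset_span ⟨↑s, ?_, rfl⟩
      simp only [Finset.coe_erase, Set.mem_diff, Set.mem_singleton_iff, Finset.mem_coe]
      exact ⟨s.2, fun h => (Finset.mem_erase.1 hs).1 (Subtype.ext h)⟩
    have hv1 : v ↑s1 ∈ Submodule.span R (v '' ↑(S.erase ↑s1)) := by
      obtain ⟨u, hu⟩ := hs1
      have hmul1 : ((u⁻¹ : Rˣ) : R) * c' s1 = 1 := by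
        rw [← hu]; exact u.inv_mul
      have h3 : v ↑s1 = ((u⁻¹ : Rˣ) : R) • (c' s1 • v ↑s1) := by
        rw [smul_smul, hmul1, one_smul]
      rw [h3, hrest]
      exact Submodule.smul_mem _ _ (neg_mem (Submodule.sum_mem _ fun s hs =>
        Submodule.smul_mem _ _ (hmemrest s hs)))
    have herase : Submodule.span R (v '' ↑(S.erase ↑s1)) = ⊤ := by
      rw [eq_top_iff, ← hSspan, Submodule.span_le]
      rintro x ⟨j, hj, rfl⟩
      by_cases hjs : j = ↑s1
      · subst hjs; exact hv1
      · refine Submodule.subset_span ⟨j, ?_, rfl⟩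
        simp only [Finset.coe_erase, Set.mem_diff, Set.mem_singleton_iff]
        exact ⟨hj, hjs⟩
    have hle : S.card ≤ (S.erase ↑s1).card := hSmin _ herase
    exact absurd hle (not_le.2 (Finset.card_erase_lt_of_mem s1.2))
  -- basis of the quotient indexed by S
  have hli : LinearIndependent R (fun s : {x // x ∈ S} => v ↑s) :=
    Fintype.linearIndependent_iff.2 hind
  have hrange : Set.range (fun s : {x // x ∈ S} => v ↑s) = v '' ↑S := by
    ext q
    constructor
    · rintro ⟨s, rfl⟩; exact ⟨↑s, Finset.mem_coe.2 s.2, rfl⟩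
    · rintro ⟨j, hj, rfl⟩; exact ⟨⟨j, hj⟩, rfl⟩
  have hsp : ⊤ ≤ Submodule.span R (Set.range fun s : {x // x ∈ S} => v ↑s) := by
    rw [hrange, hSspan]
  let b : Module.Basis {x // x ∈ S} R ((Fin d → R) ⧸ N) := Module.Basis.mk hli hsp
  have hbs : ∀ s : {x // x ∈ S}, b s = v ↑s := fun s => Module.Basis.mk_apply hli hsp s
  have hScard : S.card = i := by
    have h1 := Module.finrank_eq_card_basis b
    rw [hNrank, Fintype.card_coe] at h1
    exact h1.symm
  -- the matrix
  let A : Matrix (Fin d) (Fin d) R := fun j k =>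
    if hj : j ∈ S ∧ k ∉ S then -(b.repr (v k) ⟨j, hj.1⟩) else 0
  let G : Matrix (Fin d) (Fin d) R := 1 + A
  have hGapply : ∀ j k, G j k = (1 : Matrix (Fin d) (Fin d) R) j k + A j k := fun j k => rfl
  -- columns of G indexed by w ∉ S lie in N
  have hcolmem : ∀ w, w ∉ S → G.mulVec (Pi.single w 1) ∈ N := by
    intro w hw
    have hcol : G.mulVec (Pi.single w 1) = fun j => G j w := by
      rw [Matrix.mulVec_single]; funext j; simp [Matrix.col_apply]
    rw [← Submodule.Quotient.mk_eq_zero N, ← Submodule.mkQ_apply, hcol, hmk]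
    have hS' : ∑ j ∈ S, G j w • v j = -(v w) := by
      rw [← Finset.sum_attach S (fun j => G j w • v j)]
      have h4 : ∀ s ∈ S.attach, G (↑s) w • v ↑s = -(b.repr (v w) s • v ↑s) := by
        intro s _
        have hGsw : G (↑s) w = -(b.repr (v w) s) := by
          have hne : (↑s : Fin d) ≠ w := fun h => hw (h ▸ s.2)
          rw [hGapply, Matrix.one_apply_ne hne, zero_add]
          show dite _ _ _ = _
          rw [dif_pos ⟨s.2, hw⟩]
        rw [hGsw, neg_smul]
      rw [Finset.sum_congr rfl h4, Finset.sum_neg_distrib]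
      congr 1
      rw [← Finset.univ_eq_attach]
      calc ∑ s : {x // x ∈ S}, b.repr (v w) s • v ↑s
          = ∑ s : {x // x ∈ S}, b.repr (v w) s • b s :=
            Finset.sum_congr rfl fun s _ => by rw [hbs]
        _ = v w := b.sum_repr (v w)
    have hSc : ∑ j ∈ Sᶜ, G j w • v j = v w := by
      have h5 : ∀ j ∈ Sᶜ, G j w • v j = if j = w then v j else 0 := by
        intro j hj
        have hA : A j w = 0 := dif_neg fun h => (Finset.mem_compl.1 hj) h.1
        rw [hGapply, hA, add_zero, Matrix.one_apply]
        split_ifs <;> simp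
      rw [Finset.sum_congr rfl h5, Finset.sum_ite_eq' Sᶜ w (fun j => v j),
        if_pos (Finset.mem_compl.2 hw)]
    rw [← Finset.sum_add_sum_compl S (fun j => G j w • v j), hS', hSc, neg_add_cancel]
  refine ⟨Sᶜ, ?_, G, ?_, ?_, ?_⟩
  · rw [Finset.card_compl, hScard, Fintype.card_fin]
  · -- IsUnit
    have hAA : A * A = 0 := by
      ext j k
      rw [Matrix.mul_apply, Matrix.zero_apply]
      refine Finset.sum_eq_zero fun m _ => ?_
      by_cases hm : m ∈ S
      · have h6 : A j m = 0 := dif_neg fun h => h.2 hm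
        rw [h6, zero_mul]
      · have h6 : A m k = 0 := dif_neg fun h => hm h.1
        rw [h6, mul_zero]
    have hmul : G * (1 - A) = 1 := by
      have h7 : (1 + A) * (1 - A) = 1 - A * A := by rw [add_mul, one_mul, mul_sub, mul_one]; abel
      show (1 + A) * (1 - A) = 1
      rw [h7, hAA, sub_zero]
    have hinv : Invertible G := invertibleOfRightInverse _ _ hmul
    exact isUnit_of_invertible G
  · -- chart condition
    intro j k hjk
    have hA : A j k = 0 := by
      refine dif_neg ?_
      rintro ⟨hj, hk⟩
      rcases hjk with h | h
      · exact (Finset.mem_compl.1 h) hj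
      · exact h (Finset.mem_compl.2 hk)
    rw [hGapply, hA, add_zero, Matrix.one_apply]
  · -- the span equality
    apply le_antisymm
    · rw [Submodule.map_span, Submodule.span_le]
      rintro x ⟨y, ⟨w, hw, rfl⟩, rfl⟩
      rw [Matrix.mulVecLin_apply]
      exact hcolmem w (Finset.mem_compl.1 hw)
    · intro x hx
      set y : Fin d → R := x - ∑ w ∈ Sᶜ, x w • G.mulVec (Pi.single w 1) with hy
      have hyW : ∀ j, j ∉ S → y j = 0 := by
        intro j hj
        have hyj : y j = x j - ∑ w ∈ Sᶜ, x w * G j w := by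
          simp only [hy, Pi.sub_apply, Finset.sum_apply, Pi.smul_apply,
            Matrix.mulVec_single, smul_eq_mul, mul_one, MulOpposite.op_one, one_smul,
            Matrix.col_apply]
        have h8 : ∀ w ∈ Sᶜ, x w * G j w = if w = j then x w else 0 := by
          intro w hw
          have hA : A j w = 0 := dif_neg fun h => hj h.1
          rw [hGapply, hA, add_zero, Matrix.one_apply]
          by_cases h : j = w
          · subst h; simp
          · rw [if_neg h, if_neg (Ne.symm h), mul_zero]
        rw [hyj, Finset.sum_congr rfl h8, Finset.sum_ite_eq' Sᶜ j (fun w => x w),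
          if_pos (Finset.mem_compl.2 hj), sub_self]
      have hyN : y ∈ N := by
        rw [hy]
        exact sub_mem hx (Submodule.sum_mem _ fun w hw =>
          Submodule.smul_mem _ _ (hcolmem w (Finset.mem_compl.1 hw)))
      have hymk : N.mkQ y = 0 := by
        rwa [Submodule.mkQ_apply, Submodule.Quotient.mk_eq_zero]
      have h0 : ∑ j, y j • v j = 0 := by rw [← hmk y]; exact hymk
      have h0' : ∑ s : {x // x ∈ S}, y ↑s • v ↑s = 0 := by
        rw [Finset.univ_eq_attach, Finset.sum_attach S (fun j => y j • v j)]
        have hc0 : ∑ j ∈ Sᶜ, y j • v j = 0 :=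
          Finset.sum_eq_zero fun j hj => by
            rw [hyW j (Finset.mem_compl.1 hj), zero_smul]
        have h9 := Finset.sum_add_sum_compl S (fun j => y j • v j)
        rw [hc0, add_zero] at h9
        rw [h9, h0]
      have hy0 : y = 0 := by
        funext j
        by_cases hj : j ∈ S
        · exact hind (fun s => y ↑s) h0' ⟨j, hj⟩
        · exact hyW j hj
      have hxeq : x = ∑ w ∈ Sᶜ, x w • G.mulVec (Pi.single w 1) := by
        have h10 : x - ∑ w ∈ Sᶜ, x w • G.mulVec (Pi.single w 1) = 0 := by
          rw [← hy, hy0]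
        exact sub_eq_zero.1 h10
      rw [hxeq]
      refine Submodule.sum_mem _ fun w hw => Submodule.smul_mem _ _ ?_
      rw [Submodule.map_span]
      exact Submodule.subset_span
        ⟨Pi.single w 1, ⟨w, hw, rfl⟩, by rw [Matrix.mulVecLin_apply]⟩
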